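/- Under the standing assumptions, let i satisfy k − l ≤ i ≤ k, and suppose that in w_i' the vertices v_a and v_b are each made internal at least once and the final time at which v_b is made internal occurs strictly before the first time at which v_a is made internal. Then every time t at which v_b is made internal in w_i' satisfies k ≤ t ≤ k + C + 2. -/

import Mathlib

namespace ThompsonAut

/-- The alphabet `X = {x₀, x₁, x₀⁻¹, x₁⁻¹}`. -/
inductive Letter : Type
  | x0 | x1 | x0inv | x1inv
  deriving DecidableEq

/-- A word over `X`. -/
abbrev Word := List Letter

/-- The four generating homeomorphisms, extended by the identity outside `[0,1]`. -/
noncomputable def letterFun : Letter → ℝ → ℝ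
  | Letter.x0 => fun x =>
      if x < 0 then x
      else if x ≤ 1/4 then 2*x
      else if x ≤ 1/2 then x + 1/4
      else if x ≤ 1 then (x+1)/2
      else x
  | Letter.x1 => fun x =>
      if x ≤ 1/2 then x
      else if x ≤ 5/8 then 2*x - 1/2
      else if x ≤ 3/4 then x + 1/8
      else if x ≤ 1 then (x+1)/2
      else x
  | Letter.x0inv => fun x =>
      if x < 0 then x
      else if x ≤ 1/2 then x/2
      else if x ≤ 3/4 then x - 1/4
      else if x ≤ 1 then 2*x - 1
      else x
  | Letter.x1inv => fun x =>
      if x ≤ 1/2 then x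
      else if x ≤ 3/4 then x/2 + 1/4
      else if x ≤ 7/8 then x - 1/8
      else if x ≤ 1 then 2*x - 1
      else x

/-- The element of `F` represented by a word, composing the letters left-to-right. -/
noncomputable def wordEval (w : Word) (x : ℝ) : ℝ :=
  w.foldl (fun y l => letterFun l y) x

/-- Dyadic rational numbers. -/
def IsDyadic (x : ℝ) : Prop := ∃ (a : ℤ) (n : ℕ), x = (a : ℝ) / 2 ^ n

/-- Membership in Thompson's group `F`: (extended-by-identity) piecewise-linear
homeomorphisms of `[0,1]`, differentiable except at finitely many dyadic rationals,
all slopes integral powers of `2`. -/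
def InF (f : ℝ → ℝ) : Prop :=
  StrictMono f ∧ Function.Bijective f ∧
    (∀ x : ℝ, x ≤ 0 → f x = x) ∧ (∀ x : ℝ, 1 ≤ x → f x = x) ∧
    ∃ D : Finset ℝ, (∀ x ∈ D, IsDyadic x) ∧
      ∀ x : ℝ, x ∉ D → ∃ n : ℤ, HasDerivAt f ((2 : ℝ) ^ n) x

/-- `|g|_X`: the minimal length of a word over `X` representing `g`. -/
noncomputable def glen (f : ℝ → ℝ) : ℕ :=
  sInf {n : ℕ | ∃ w : Word, wordEval w = f ∧ w.length = n}

/-- `|f⁻¹ g|_X` (left-to-right composition: apply `f⁻¹` first, then `g`). -/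
noncomputable def groupDist (f g : ℝ → ℝ) : ℕ :=
  glen (fun x => g (Function.invFun f x))

/-- The `M`-fellow-traveler property for pairs of words of `L` representing elements
at distance at most one in the Cayley graph. -/
def FellowTraveler (L : Set Word) (M : ℕ) : Prop :=
  ∀ w ∈ L, ∀ v ∈ L, groupDist (wordEval w) (wordEval v) ≤ 1 →
    ∀ t : ℕ, groupDist (wordEval (w.take t)) (wordEval (v.take t)) ≤ M

/-- `w_i = x₀^{-(k-1)} x₁⁻¹ x₀^{2k} x₁⁻¹ x₀^{-i}`. -/
def wword (k i : ℕ) : Word :=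
  List.replicate (k - 1) Letter.x0inv ++ [Letter.x1inv] ++
    List.replicate (2 * k) Letter.x0 ++ [Letter.x1inv] ++ List.replicate i Letter.x0inv

/-- `f_k = x₀^{-(k-1)} x₁⁻¹ x₀^{2k} x₁⁻¹ x₀^{-k}`. -/
def fword (k : ℕ) : Word := wword k k

/-- `u_i = x₀^{k+1} x₁⁻¹ x₀^{-(2k-1)} x₁⁻¹ x₀^{i}`. -/
def uword (k i : ℕ) : Word :=
  List.replicate (k + 1) Letter.x0 ++ [Letter.x1inv] ++
    List.replicate (2 * k - 1) Letter.x0inv ++ [Letter.x1inv] ++ List.replicate i Letter.x0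

/-- `g_k = x₀^{k+1} x₁⁻¹ x₀^{-(2k-1)} x₁⁻¹ x₀^{k-1}`. -/
def gword (k : ℕ) : Word := uword k (k - 1)

/-- A vertex of the infinite binary tree: the standard dyadic interval
`[idx/2^depth, (idx+1)/2^depth]`. -/
structure Vertex : Type where
  depth : ℕ
  idx : ℕ
  isLt : idx < 2 ^ depth

/-- The midpoint of the standard dyadic interval of a vertex. -/
noncomputable def Vertex.mid (v : Vertex) : ℝ := (2 * v.idx + 1) / 2 ^ (v.depth + 1)

/-- The depth of the lowest common ancestor of two vertices of the tree. -/
noncomputable def lcaDepth (u v : Vertex) : ℕ :=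
  sSup {j : ℕ | j ≤ u.depth ∧ j ≤ v.depth ∧
    u.idx / 2 ^ (u.depth - j) = v.idx / 2 ^ (v.depth - j)}

/-- The number of edges on the geodesic path between two vertices of the tree. -/
noncomputable def treeDist (u v : Vertex) : ℕ :=
  (u.depth - lcaDepth u v) + (v.depth - lcaDepth u v)

/-- The pivot vertex `[1/2, 1]`. -/
def pivotVertex : Vertex := ⟨1, 1, by norm_num⟩

/-- Tree distance from the vertex with midpoint `y` to the pivot `[1/2, 1]`. -/
noncomputable def distToPivot (y : ℝ) : ℕ :=
  sInf {d : ℕ | ∃ u : Vertex, Vertex.mid u = y ∧ treeDist u pivotVertex = d}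

/-- `d_a(w(t))` for the vertex with midpoint `v`. -/
noncomputable def dA (w : Word) (t : ℕ) (v : ℝ) : ℕ :=
  distToPivot (wordEval (w.take t) v)

/-- Midpoints of exterior vertices: `[0, 2^{-p}]` (`p ≥ 0`) or `[1 - 2^{-q}, 1]` (`q ≥ 1`). -/
def IsExteriorMid (x : ℝ) : Prop :=
  (∃ p : ℕ, x = (1/2 : ℝ) ^ (p + 1)) ∨ (∃ q : ℕ, 1 ≤ q ∧ x = 1 - (1/2 : ℝ) ^ (q + 1))

/-- Midpoints of interior vertices. -/
def IsInteriorMid (x : ℝ) : Prop :=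
  IsDyadic x ∧ 0 < x ∧ x < 1 ∧ ¬ IsExteriorMid x

/-- The vertex with midpoint `v` is internal at time `t` in `w`. -/
def internalAt (w : Word) (t : ℕ) (v : ℝ) : Prop :=
  IsInteriorMid (wordEval (w.take t) v)

/-- The vertex with midpoint `v` is made internal at time `t` in `w`. -/
def madeInternalAt (w : Word) (t : ℕ) (v : ℝ) : Prop :=
  wordEval (w.take t) v = 5/8 ∧ wordEval (w.take (t - 1)) v = 3/4

/-- The vertex with midpoint `v` is made external at time `t` in `w`. -/
def madeExternalAt (w : Word) (t : ℕ) (v : ℝ) : Prop :=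
  wordEval (w.take t) v = 3/4 ∧ wordEval (w.take (t - 1)) v = 5/8

/-- Midpoint of `v_a = [0, 2^{-k}]`. -/
noncomputable def vaMid (k : ℕ) : ℝ := (1/2 : ℝ) ^ (k + 1)

/-- Midpoint of `v_b = [1 - 2^{-k}, 1]`. -/
noncomputable def vbMid (k : ℕ) : ℝ := 1 - (1/2 : ℝ) ^ (k + 1)

/-- Midpoints of the vertices of `A = {[0, 2^{-p}] : 0 ≤ p ≤ k-1}`. -/
def Amid (k : ℕ) : Set ℝ := {x | ∃ p : ℕ, p ≤ k - 1 ∧ x = (1/2 : ℝ) ^ (p + 1)}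

/-- Midpoints of the vertices of `B = {[1 - 2^{-q}, 1] : 1 ≤ q ≤ k-1}`. -/
def Bmid (k : ℕ) : Set ℝ := {x | ∃ q : ℕ, 1 ≤ q ∧ q ≤ k - 1 ∧ x = 1 - (1/2 : ℝ) ^ (q + 1)}

/-- Condition (1) for the `w_i'` words: `v_a` and `v_b` are each made internal at least
once, and the final time `v_b` is made internal is strictly before the first time `v_a`
is made internal. -/
def CondW1 (w : Word) (k : ℕ) : Prop :=
  (∃ t : ℕ, madeInternalAt w t (vbMid k)) ∧ (∃ t : ℕ, madeInternalAt w t (vaMid k)) ∧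
    ∀ s t : ℕ, madeInternalAt w s (vbMid k) → madeInternalAt w t (vaMid k) → s < t

/-- Condition (2) for the `w_i'` words: no vertex of `B` is internal at any time at
which `v_a` is made internal. -/
def CondW2 (w : Word) (k : ℕ) : Prop :=
  ∀ t : ℕ, madeInternalAt w t (vaMid k) → ∀ x ∈ Bmid k, ¬ internalAt w t x

/-- Condition (1) for the `u_i'` words: `v_a` and `v_b` are each made internal at least
once, and the final time `v_a` is made internal is strictly before the first time `v_b`
is made internal. -/
def CondU1 (w : Word) (k : ℕ) : Prop :=
  (∃ t : ℕ, madeInternalAt w t (vaMid k)) ∧ (∃ t : ℕ, madeInternalAt w t (vbMid k)) ∧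
    ∀ s t : ℕ, madeInternalAt w s (vaMid k) → madeInternalAt w t (vbMid k) → s < t

/-- Condition (2) for the `u_i'` words: at the final time at which `v_a` is made
internal, at most `C` of the vertices of `B` are internal. -/
def CondU2 (w : Word) (k C : ℕ) : Prop :=
  ∀ t : ℕ, madeInternalAt w t (vaMid k) → (∀ s : ℕ, madeInternalAt w s (vaMid k) → s ≤ t) →
    {x ∈ Bmid k | internalAt w t x}.Finite ∧ {x ∈ Bmid k | internalAt w t x}.ncard ≤ C

/-- A language over `X` is regular iff it is accepted by a finite state automaton. -/
def IsRegularLang (L : Set Word) : Prop :=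
  ∃ (σ : Type) (_ : Fintype σ) (M : DFA Letter σ), ∀ w : Word, w ∈ M.accepts ↔ w ∈ L

/-! ### Branch evaluation lemmas -/

lemma x0_lo {x : ℝ} (h0 : 0 ≤ x) (h : x ≤ 1/4) : letterFun Letter.x0 x = 2*x := by
  (try simp only [letterFun]); split_ifs <;> linarith

lemma x0_mid {x : ℝ} (h : 1/4 ≤ x) (h2 : x ≤ 1/2) : letterFun Letter.x0 x = x + 1/4 := by
  (try simp only [letterFun]); split_ifs <;> linarith

lemma x0_hi {x : ℝ} (h : 1/2 ≤ x) (h2 : x ≤ 1) : letterFun Letter.x0 x = (x+1)/2 := by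
  (try simp only [letterFun]); split_ifs <;> linarith

lemma x0inv_lo {x : ℝ} (h0 : 0 ≤ x) (h : x ≤ 1/2) : letterFun Letter.x0inv x = x/2 := by
  (try simp only [letterFun]); split_ifs <;> linarith

lemma x0inv_mid {x : ℝ} (h : 1/2 ≤ x) (h2 : x ≤ 3/4) : letterFun Letter.x0inv x = x - 1/4 := by
  (try simp only [letterFun]); split_ifs <;> linarith

lemma x0inv_hi {x : ℝ} (h : 3/4 ≤ x) (h2 : x ≤ 1) : letterFun Letter.x0inv x = 2*x - 1 := by
  (try simp only [letterFun]); split_ifs <;> linarith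

lemma x1_lo {x : ℝ} (h : x ≤ 1/2) : letterFun Letter.x1 x = x := by
  (try simp only [letterFun]); split_ifs <;> linarith

lemma x1inv_lo {x : ℝ} (h : x ≤ 1/2) : letterFun Letter.x1inv x = x := by
  (try simp only [letterFun]); split_ifs <;> linarith

lemma x1inv_mid {x : ℝ} (h : 1/2 ≤ x) (h2 : x ≤ 3/4) : letterFun Letter.x1inv x = x/2 + 1/4 := by
  (try simp only [letterFun]); split_ifs <;> linarith

lemma x1inv_hh {x : ℝ} (h : 7/8 ≤ x) (h2 : x ≤ 1) : letterFun Letter.x1inv x = 2*x - 1 := by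
  (try simp only [letterFun]); split_ifs <;> linarith

set_option maxHeartbeats 1000000 in
lemma letter_lb1 (l : Letter) {x : ℝ} (h0 : 0 < x) (h1 : x < 1) :
    x/2 ≤ letterFun l x := by
  cases l <;> ((try simp only [letterFun]); split_ifs <;> linarith)

set_option maxHeartbeats 1000000 in
lemma letter_lb2 (l : Letter) {x : ℝ} (h0 : 0 < x) (h1 : x < 1) :
    letterFun l x ≤ 2*x := by
  cases l <;> ((try simp only [letterFun]); split_ifs <;> linarith)

set_option maxHeartbeats 1000000 in
lemma letter_lb3 (l : Letter) {x : ℝ} (h0 : 0 < x) (h1 : x < 1) :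
    (1-x)/2 ≤ 1 - letterFun l x := by
  cases l <;> ((try simp only [letterFun]); split_ifs <;> linarith)

set_option maxHeartbeats 1000000 in
lemma letter_lb4 (l : Letter) {x : ℝ} (h0 : 0 < x) (h1 : x < 1) :
    1 - letterFun l x ≤ 2*(1-x) := by
  cases l <;> ((try simp only [letterFun]); split_ifs <;> linarith)

lemma letter_pos (l : Letter) {x : ℝ} (h0 : 0 < x) (h1 : x < 1) :
    0 < letterFun l x ∧ letterFun l x < 1 :=
  ⟨lt_of_lt_of_le (by linarith) (letter_lb1 l h0 h1), by have := letter_lb3 l h0 h1; linarith⟩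

lemma x0_ge {x : ℝ} (h0 : 0 ≤ x) (h1 : x ≤ 1) : x ≤ letterFun Letter.x0 x := by
  (try simp only [letterFun]); split_ifs <;> linarith

lemma x1_ge {x : ℝ} (h0 : 0 ≤ x) (h1 : x ≤ 1) : x ≤ letterFun Letter.x1 x := by
  (try simp only [letterFun]); split_ifs <;> linarith

lemma x0inv_le {x : ℝ} (h0 : 0 ≤ x) (h1 : x ≤ 1) : letterFun Letter.x0inv x ≤ x := by
  (try simp only [letterFun]); split_ifs <;> linarith

lemma x1inv_le {x : ℝ} (h0 : 0 ≤ x) (h1 : x ≤ 1) : letterFun Letter.x1inv x ≤ x := by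
  (try simp only [letterFun]); split_ifs <;> linarith

lemma x1_gt_half {x : ℝ} (h : 1/2 < x) (h1 : x ≤ 1) : 1/2 < letterFun Letter.x1 x := by
  (try simp only [letterFun]); split_ifs <;> linarith

lemma x1inv_gt_half {x : ℝ} (h : 1/2 < x) (h1 : x ≤ 1) : 1/2 < letterFun Letter.x1inv x := by
  (try simp only [letterFun]); split_ifs <;> linarith

set_option maxHeartbeats 4000000 in
lemma x0_sm : StrictMono (letterFun Letter.x0) := by
  intro x y hxy; (try simp only [letterFun]); split_ifs <;> linarith

set_option maxHeartbeats 4000000 in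
lemma x1_sm : StrictMono (letterFun Letter.x1) := by
  intro x y hxy; (try simp only [letterFun]); split_ifs <;> linarith

set_option maxHeartbeats 4000000 in
lemma x0inv_sm : StrictMono (letterFun Letter.x0inv) := by
  intro x y hxy; (try simp only [letterFun]); split_ifs <;> linarith

set_option maxHeartbeats 4000000 in
lemma x1inv_sm : StrictMono (letterFun Letter.x1inv) := by
  intro x y hxy; (try simp only [letterFun]); split_ifs <;> linarith

lemma letter_strictMono (l : Letter) : StrictMono (letterFun l) := by
  cases l
  · exact x0_sm
  · exact x1_sm
  · exact x0inv_sm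
  · exact x1inv_sm

/-! ### Dyadic depth via `Int.log` -/

noncomputable def lam (x : ℝ) : ℤ := -Int.log 2 x - 1

lemma logEq {x : ℝ} (m : ℤ) (h1 : (2:ℝ)^m ≤ x) (h2 : x < (2:ℝ)^(m+1)) :
    Int.log 2 x = m := by
  have hx : (0:ℝ) < x := lt_of_lt_of_le (zpow_pos (by norm_num) m) h1
  have hb : 1 < 2 := one_lt_two
  have hA : m ≤ Int.log 2 x := by
    rw [← Int.zpow_le_iff_le_log hb hx]; exact_mod_cast h1
  have hB : Int.log 2 x < m + 1 := by
    rw [← Int.lt_zpow_iff_log_lt hb hx]; exact_mod_cast h2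
  omega

lemma lam_half {x : ℝ} (h : 0 < x) : lam (x/2) = lam x + 1 := by
  have hb : (1:ℕ) < 2 := one_lt_two
  have h1 : (2:ℝ) ^ Int.log 2 x ≤ x := Int.zpow_log_le_self hb h
  have h2 : x < (2:ℝ) ^ (Int.log 2 x + 1) := Int.lt_zpow_succ_log_self hb x
  have : Int.log 2 (x/2) = Int.log 2 x - 1 := by
    apply logEq
    · rw [zpow_sub₀ (by norm_num : (2:ℝ) ≠ 0), zpow_one]
      exact div_le_div_of_nonneg_right h1 (by norm_num) |>.trans_eq rfl
    · have : Int.log 2 x - 1 + 1 = Int.log 2 x := by ring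
      rw [this, show Int.log 2 x = Int.log 2 x + 1 - 1 by ring,
        zpow_sub₀ (by norm_num : (2:ℝ) ≠ 0), zpow_one]
      exact div_lt_div_of_pos_right h2 (by norm_num)
  simp [lam, this]

lemma lam_double {x : ℝ} (h : 0 < x) : lam (2*x) = lam x - 1 := by
  have := lam_half (x := 2*x) (by linarith)
  have h2 : 2*x/2 = x := by ring
  rw [h2] at this
  omega

lemma lam_anti {x y : ℝ} (h0 : 0 < x) (h : x ≤ y) : lam y ≤ lam x := by
  have := Int.log_mono_right h0 h (b := 2)
  simp only [lam]; omega

lemma lam_nonneg {x : ℝ} (h0 : 0 < x) (h1 : x < 1) : 0 ≤ lam x := by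
  have : Int.log 2 x < 0 := by
    rw [← Int.lt_zpow_iff_log_lt one_lt_two h0]; simpa using h1
  simp only [lam]; omega

lemma lam_zero {x : ℝ} (h : 1/2 ≤ x) (h1 : x < 1) : lam x = 0 := by
  have : Int.log 2 x = -1 := by
    apply logEq <;> norm_num <;> linarith
  simp [lam, this]

lemma lam_one {x : ℝ} (h : 1/4 ≤ x) (h1 : x < 1/2) : lam x = 1 := by
  have : Int.log 2 x = -2 := by
    apply logEq <;> norm_num <;> linarith
  simp [lam, this]

lemma lam_ge_one {x : ℝ} (h0 : 0 < x) (h1 : x < 1/2) : 1 ≤ lam x := by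
  have : Int.log 2 x < -1 := by
    rw [← Int.lt_zpow_iff_log_lt one_lt_two h0]; norm_num; linarith
  simp only [lam]; omega

lemma lam_step (l : Letter) {x : ℝ} (h0 : 0 < x) (h1 : x < 1) :
    lam x - 1 ≤ lam (letterFun l x) ∧ lam (letterFun l x) ≤ lam x + 1 := by
  constructor
  · have h2 := letter_lb2 l h0 h1
    have := lam_anti (x := letterFun l x)
      (lt_of_lt_of_le (by linarith) (letter_lb1 l h0 h1)) h2
    rw [lam_double h0] at this; omega
  · have h2 := letter_lb1 l h0 h1
    have := lam_anti (x := x/2) (by linarith) h2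
    rw [lam_half h0] at this; omega

/-! ### Dichotomy lemmas for the ledgers -/

lemma x0_ell_hi {x : ℝ} (h : 1/2 ≤ x) (h1 : x < 1) :
    lam (1 - letterFun Letter.x0 x) = lam (1-x) + 1 := by
  rw [x0_hi h h1.le, show (1:ℝ) - (x+1)/2 = (1-x)/2 by ring, lam_half (by linarith)]

lemma x0_lam_lo {x : ℝ} (h0 : 0 < x) (h1 : x < 1/2) :
    lam (letterFun Letter.x0 x) = lam x - 1 := by
  rcases le_or_gt x (1/4) with h | h
  · rw [x0_lo h0.le h, lam_double h0]
  · rw [x0_mid h.le h1.le, lam_one h.le h1, lam_zero (by linarith) (by linarith)]; ring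

lemma x0_lam_eq_hi {x : ℝ} (h : 1/2 ≤ x) (h1 : x < 1) :
    lam (letterFun Letter.x0 x) = lam x := by
  rw [x0_hi h h1.le, lam_zero h h1, lam_zero (by linarith) (by linarith)]

lemma x0inv_ell_hi {x : ℝ} (h : 3/4 ≤ x) (h1 : x < 1) :
    lam (1 - letterFun Letter.x0inv x) = lam (1-x) - 1 := by
  rw [x0inv_hi h h1.le, show (1:ℝ) - (2*x-1) = 2*(1-x) by ring, lam_double (by linarith)]

lemma x0inv_lam_lo {x : ℝ} (h0 : 0 < x) (h1 : x < 3/4) :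
    lam (letterFun Letter.x0inv x) = lam x + 1 := by
  rcases le_or_gt x (1/2) with h | h
  · rw [x0inv_lo h0.le h, lam_half h0]
  · rw [x0inv_mid h.le h1.le, lam_zero h.le (by linarith),
      lam_one (by linarith) (by linarith)]; ring

lemma x0inv_lam_eq_hi {x : ℝ} (h : 3/4 ≤ x) (h1 : x < 1) :
    lam (letterFun Letter.x0inv x) = lam x := by
  rw [x0inv_hi h h1.le, lam_zero (by linarith) h1, lam_zero (by linarith) (by linarith)]

lemma x1_lam_eq {x : ℝ} (h0 : 0 < x) (h1 : x < 1) :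
    lam (letterFun Letter.x1 x) = lam x := by
  rcases le_or_gt x (1/2) with h | h
  · rw [x1_lo h]
  · rw [lam_zero h.le h1, lam_zero (x1_gt_half h h1.le).le (letter_pos Letter.x1 h0 h1).2]

lemma x1inv_lam_eq {x : ℝ} (h0 : 0 < x) (h1 : x < 1) :
    lam (letterFun Letter.x1inv x) = lam x := by
  rcases le_or_gt x (1/2) with h | h
  · rw [x1inv_lo h]
  · rw [lam_zero h.le h1,
      lam_zero (x1inv_gt_half h h1.le).le (letter_pos Letter.x1inv h0 h1).2]

/-! ### Inverses, bijectivity, boundary -/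

def invLetter : Letter → Letter
  | Letter.x0 => Letter.x0inv
  | Letter.x0inv => Letter.x0
  | Letter.x1 => Letter.x1inv
  | Letter.x1inv => Letter.x1

set_option maxHeartbeats 2000000 in
lemma x0_x0inv (x : ℝ) : letterFun Letter.x0 (letterFun Letter.x0inv x) = x := by
  (try simp only [letterFun]); split_ifs <;> linarith

set_option maxHeartbeats 2000000 in
lemma x0inv_x0 (x : ℝ) : letterFun Letter.x0inv (letterFun Letter.x0 x) = x := by
  (try simp only [letterFun]); split_ifs <;> linarith

set_option maxHeartbeats 2000000 in
lemma x1_x1inv (x : ℝ) : letterFun Letter.x1 (letterFun Letter.x1inv x) = x := by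
  (try simp only [letterFun]); split_ifs <;> linarith

set_option maxHeartbeats 2000000 in
lemma x1inv_x1 (x : ℝ) : letterFun Letter.x1inv (letterFun Letter.x1 x) = x := by
  (try simp only [letterFun]); split_ifs <;> linarith

lemma letter_inv_right (l : Letter) (x : ℝ) :
    letterFun l (letterFun (invLetter l) x) = x := by
  cases l
  · exact x0_x0inv x
  · exact x1_x1inv x
  · exact x0inv_x0 x
  · exact x1inv_x1 x

lemma letter_inv_left (l : Letter) (x : ℝ) :
    letterFun (invLetter l) (letterFun l x) = x := by
  cases l
  · exact x0inv_x0 x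
  · exact x1inv_x1 x
  · exact x0_x0inv x
  · exact x1_x1inv x

lemma letter_bijective (l : Letter) : Function.Bijective (letterFun l) :=
  Function.bijective_iff_has_inverse.2
    ⟨letterFun (invLetter l), fun x => letter_inv_left l x, fun x => letter_inv_right l x⟩

lemma letter_nonpos (l : Letter) {x : ℝ} (h : x ≤ 0) : letterFun l x = x := by
  cases l <;> ((try simp only [letterFun]); split_ifs <;> linarith)

lemma letter_ge_one (l : Letter) {x : ℝ} (h : 1 ≤ x) : letterFun l x = x := by
  cases l <;> ((try simp only [letterFun]); split_ifs <;> linarith)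

/-! ### wordEval basics -/

lemma wordEval_nil (x : ℝ) : wordEval [] x = x := rfl

lemma wordEval_cons (l : Letter) (w : Word) (x : ℝ) :
    wordEval (l :: w) x = wordEval w (letterFun l x) := rfl

lemma wordEval_append (u v : Word) (x : ℝ) :
    wordEval (u ++ v) x = wordEval v (wordEval u x) := by
  simp [wordEval, List.foldl_append]

lemma wordEval_strictMono (w : Word) : StrictMono (wordEval w) := by
  induction w with
  | nil => exact strictMono_id
  | cons l w ih =>
    intro x y h
    exact ih (letter_strictMono l h)

lemma wordEval_mem (w : Word) {x : ℝ} (h0 : 0 < x) (h1 : x < 1) :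
    0 < wordEval w x ∧ wordEval w x < 1 := by
  induction w generalizing x with
  | nil => exact ⟨h0, h1⟩
  | cons l w ih =>
    rw [wordEval_cons]
    exact ih (letter_pos l h0 h1).1 (letter_pos l h0 h1).2

lemma wordEval_replicate (n : ℕ) (l : Letter) (x : ℝ) :
    wordEval (List.replicate n l) x = (letterFun l)^[n] x := by
  induction n generalizing x with
  | zero => rfl
  | succ n ih =>
    rw [List.replicate_succ, wordEval_cons, ih, Function.iterate_succ_apply]

/-! ### iterate formulas -/

lemma two_le_pow_succ (n : ℕ) : (2:ℝ) ≤ 2^(n+1) := by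
  calc (2:ℝ) = 2^1 := (pow_one 2).symm
  _ ≤ 2^(n+1) := by
    apply pow_le_pow_right₀ (by norm_num)
    omega

lemma iter_x0inv_small (n : ℕ) {x : ℝ} (h0 : 0 < x) (h : x ≤ 1/2) :
    (letterFun Letter.x0inv)^[n] x = x / 2^n := by
  induction n generalizing x with
  | zero => simp
  | succ n ih =>
    rw [Function.iterate_succ_apply, x0inv_lo h0.le h, ih (by linarith) (by linarith),
      pow_succ]
    ring

lemma iter_x0inv_big (n : ℕ) {x : ℝ} (h : 2^n * (1-x) ≤ 1/4) (h1 : x ≤ 1) :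
    (letterFun Letter.x0inv)^[n] x = 1 - 2^n * (1-x) := by
  induction n generalizing x with
  | zero => simp
  | succ n ih =>
    have h2 := two_le_pow_succ n
    have hp : (0:ℝ) ≤ 2^n := by positivity
    have hx : (0:ℝ) ≤ 1 - x := by linarith
    have hxx : 1 - x ≤ 1/4 := by nlinarith
    have h34 : 3/4 ≤ x := by linarith
    rw [Function.iterate_succ_apply, x0inv_hi h34 h1,
      ih (by rw [show (1:ℝ) - (2*x-1) = 2*(1-x) by ring]; nlinarith [pow_succ (2:ℝ) n])
        (by linarith)]
    rw [show (1:ℝ) - (2*x-1) = 2*(1-x) by ring, pow_succ]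
    ring

lemma iter_x0_small (n : ℕ) {x : ℝ} (h0 : 0 < x) (h : 2^n * x ≤ 1/2) :
    (letterFun Letter.x0)^[n] x = 2^n * x := by
  induction n generalizing x with
  | zero => simp
  | succ n ih =>
    have h2 := two_le_pow_succ n
    have hq : x ≤ 1/4 := by nlinarith
    rw [Function.iterate_succ_apply, x0_lo h0.le hq,
      ih (by linarith) (by nlinarith [pow_succ (2:ℝ) n]), pow_succ]
    ring

lemma iter_x0_big (n : ℕ) {x : ℝ} (h : 1/2 ≤ x) (h1 : x ≤ 1) :
    (letterFun Letter.x0)^[n] x = 1 - (1-x)/2^n := by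
  induction n generalizing x with
  | zero => simp
  | succ n ih =>
    rw [Function.iterate_succ_apply, x0_hi h h1,
      ih (by linarith) (by linarith), pow_succ,
      show (1:ℝ) - (x+1)/2 = (1-x)/2 by ring]
    ring

/-! ### endpoint evaluations -/

lemma wordEval_singleton (l : Letter) (x : ℝ) : wordEval [l] x = letterFun l x := rfl

lemma pow_merge (a b c : ℕ) (h : a + b = c) : (2:ℝ)^a * 2^b = 2^c := by
  rw [← pow_add]; congr 1

lemma pow_le_pow_exp {a b : ℕ} (h : a ≤ b) : (2:ℝ)^a ≤ 2^b :=
  pow_le_pow_right₀ (by norm_num) h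

lemma eval_wword_va (k i : ℕ) (hk : 2 ≤ k) (hi1 : 1 ≤ i) :
    wordEval (wword k i) ((1/2:ℝ)^(k+1)) = 3 / 2^(i+2) := by
  have hhalf : ((1/2:ℝ))^(k+1) = 1/2^(k+1) := by rw [div_pow, one_pow]
  have s1 : wordEval (List.replicate (k-1) Letter.x0inv) ((1:ℝ)/2^(k+1)) = 1/2^(2*k) := by
    rw [wordEval_replicate, iter_x0inv_small _ (by positivity)
      (by rw [div_le_div_iff₀ (by positivity) (by norm_num)]
          nlinarith [pow_le_pow_exp (show 1 ≤ k+1 by omega), pow_one (2:ℝ)])]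
    rw [div_div, pow_merge (k+1) (k-1) (2*k) (by omega)]
  have s2 : letterFun Letter.x1inv ((1:ℝ)/2^(2*k)) = 1/2^(2*k) := by
    apply x1inv_lo
    rw [div_le_div_iff₀ (by positivity) (by norm_num)]
    nlinarith [pow_le_pow_exp (show 1 ≤ 2*k by omega), pow_one (2:ℝ)]
  have s3 : wordEval (List.replicate (2*k) Letter.x0) ((1:ℝ)/2^(2*k)) = 3/4 := by
    have h2k : 2*k = (2*k-1)+1 := by omega
    have hv : (2:ℝ)^(2*k-1) * (1/2^(2*k)) = 1/2 := by
      rw [mul_one_div, div_eq_div_iff (by positivity) (by norm_num), one_mul,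
        ← pow_succ]
      congr 1; omega
    rw [wordEval_replicate,
      show (letterFun Letter.x0)^[2*k] = (letterFun Letter.x0)^[2*k-1+1] from by rw [← h2k],
      Function.iterate_succ_apply',
      iter_x0_small (2*k-1) (by positivity) (le_of_eq hv), hv,
      x0_mid (by norm_num) (by norm_num)]
    norm_num
  have s4 : letterFun Letter.x1inv (3/4 : ℝ) = 5/8 := by
    rw [x1inv_mid (by norm_num) (by norm_num)]; norm_num
  have s5 : wordEval (List.replicate i Letter.x0inv) (5/8 : ℝ) = 3/2^(i+2) := by
    have hi : i = (i-1)+1 := by omega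
    rw [wordEval_replicate,
      show (letterFun Letter.x0inv)^[i] = (letterFun Letter.x0inv)^[i-1+1] from by rw [← hi],
      Function.iterate_succ_apply,
      x0inv_mid (by norm_num) (by norm_num),
      show (5:ℝ)/8 - 1/4 = 3/8 by norm_num,
      iter_x0inv_small _ (by norm_num) (by norm_num)]
    rw [div_div, show (8:ℝ) = 2^3 by norm_num, pow_merge 3 (i-1) (i+2) (by omega)]
  unfold wword
  simp only [wordEval_append, wordEval_singleton]
  rw [hhalf, s1, s2, s3, s4, s5]

lemma eval_wword_vb (k i : ℕ) (hk : 2 ≤ k) (hi2 : i ≤ k) :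
    wordEval (wword k i) (1 - (1/2:ℝ)^(k+1)) = 1 - 3 / 2^(2*k+2-i) := by
  have hhalf : ((1/2:ℝ))^(k+1) = 1/2^(k+1) := by rw [div_pow, one_pow]
  have hppos : (0:ℝ) < 1/2^(k+1) := by positivity
  have s1 : wordEval (List.replicate (k-1) Letter.x0inv) (1 - (1:ℝ)/2^(k+1)) = 3/4 := by
    have hv : (2:ℝ)^(k-1) * (1/2^(k+1)) = 1/4 := by
      rw [mul_one_div, div_eq_div_iff (by positivity) (by norm_num), one_mul,
        show (4:ℝ) = 2^2 by norm_num, pow_merge (k-1) 2 (k+1) (by omega)]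
    have hrw : (1:ℝ) - (1 - 1/2^(k+1)) = 1/2^(k+1) := by ring
    rw [wordEval_replicate, iter_x0inv_big _ (by rw [hrw]; exact hv.le) (by linarith),
      hrw, hv]
    norm_num
  have s2 : letterFun Letter.x1inv (3/4 : ℝ) = 5/8 := by
    rw [x1inv_mid (by norm_num) (by norm_num)]; norm_num
  have s3 : wordEval (List.replicate (2*k) Letter.x0) (5/8 : ℝ) = 1 - 3/2^(2*k+3) := by
    rw [wordEval_replicate, iter_x0_big _ (by norm_num) (by norm_num),
      show (1:ℝ) - 5/8 = 3/8 by norm_num, div_div,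
      show (8:ℝ) = 2^3 by norm_num, pow_merge 3 (2*k) (2*k+3) (by omega)]
  have h24 : (24:ℝ) ≤ 2^(2*k+3) := by
    calc (24:ℝ) ≤ 2^5 := by norm_num
    _ ≤ 2^(2*k+3) := pow_le_pow_exp (by omega)
  have hq3 : (3:ℝ)/2^(2*k+3) ≤ 1/8 := by
    rw [div_le_div_iff₀ (by positivity) (by norm_num)]; linarith
  have hq3' : (0:ℝ) < 3/2^(2*k+3) := by positivity
  have s4 : letterFun Letter.x1inv (1 - 3/2^(2*k+3) : ℝ) = 1 - 3/2^(2*k+2) := by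
    rw [x1inv_hh (by linarith) (by linarith)]
    have hpow : (2:ℝ)^(2*k+3) = 2^(2*k+2)*2 := by rw [← pow_succ]
    rw [hpow]; ring
  have key0 : (3:ℝ)/2^(2*k+2) = (3/2^(2*k+2-i))/2^i := by
    rw [div_div, pow_merge (2*k+2-i) i (2*k+2) (by omega)]
  have key : (2:ℝ)^i * (3/2^(2*k+2)) = 3/2^(2*k+2-i) := by
    rw [key0]; field_simp
  have h16 : (16:ℝ) ≤ 2^(2*k+2-i) := by
    calc (16:ℝ) = 2^4 := by norm_num
    _ ≤ _ := pow_le_pow_exp (by omega)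
  have hble : (2:ℝ)^i * (3/2^(2*k+2)) ≤ 1/4 := by
    rw [key, div_le_div_iff₀ (by positivity) (by norm_num)]; linarith
  have hx2 : (0:ℝ) < 3/2^(2*k+2) := by positivity
  have hrw2 : (1:ℝ) - (1 - 3/2^(2*k+2)) = 3/2^(2*k+2) := by ring
  have s5 : wordEval (List.replicate i Letter.x0inv) (1 - 3/2^(2*k+2) : ℝ)
      = 1 - 3/2^(2*k+2-i) := by
    rw [wordEval_replicate, iter_x0inv_big i (by rw [hrw2]; exact hble) (by linarith),
      hrw2, key]
  unfold wword
  simp only [wordEval_append, wordEval_singleton]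
  rw [hhalf, s1, s2, s3, s4, s5]


/-! ### Dyadic numbers -/

lemma dy_half {x : ℝ} (h : IsDyadic x) : IsDyadic (x/2) := by
  obtain ⟨a, n, rfl⟩ := h
  exact ⟨a, n+1, by rw [pow_succ]; ring⟩

lemma dy_two {x : ℝ} (h : IsDyadic x) : IsDyadic (2*x) := by
  obtain ⟨a, n, rfl⟩ := h
  exact ⟨2*a, n, by push_cast; ring⟩

lemma dy_add {x y : ℝ} (hx : IsDyadic x) (hy : IsDyadic y) : IsDyadic (x+y) := by
  obtain ⟨a, n, rfl⟩ := hx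
  obtain ⟨b, m, rfl⟩ := hy
  refine ⟨a*2^m + b*2^n, n+m, ?_⟩
  have h1 : ((2:ℝ))^n ≠ 0 := by positivity
  have h2 : ((2:ℝ))^m ≠ 0 := by positivity
  push_cast
  rw [div_add_div _ _ h1 h2, pow_add]
  ring

lemma dy_neg {x : ℝ} (hx : IsDyadic x) : IsDyadic (-x) := by
  obtain ⟨a, n, rfl⟩ := hx
  exact ⟨-a, n, by push_cast; ring⟩

lemma dyi_two (x : ℝ) : IsDyadic (2*x) ↔ IsDyadic x := by
  constructor
  · intro h
    have := dy_half h
    rwa [show 2*x/2 = x by ring] at this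
  · exact dy_two

lemma dyi_half (x : ℝ) : IsDyadic (x/2) ↔ IsDyadic x := by
  constructor
  · intro h
    have := dy_two h
    rwa [show 2*(x/2) = x by ring] at this
  · exact dy_half

lemma dyi_add (c : ℝ) (hc : IsDyadic c) (x : ℝ) : IsDyadic (x + c) ↔ IsDyadic x := by
  constructor
  · intro h
    have := dy_add h (dy_neg hc)
    rwa [show x + c + -c = x by ring] at this
  · intro h
    exact dy_add h hc

lemma letter_dyadic_iff (l : Letter) (x : ℝ) : IsDyadic (letterFun l x) ↔ IsDyadic x := by
  have d14 : IsDyadic (1/4 : ℝ) := ⟨1, 2, by norm_num⟩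
  have dm14 : IsDyadic (-(1/4) : ℝ) := ⟨-1, 2, by norm_num⟩
  have d12 : IsDyadic (1/2 : ℝ) := ⟨1, 1, by norm_num⟩
  have dm12 : IsDyadic (-(1/2) : ℝ) := ⟨-1, 1, by norm_num⟩
  have d18 : IsDyadic (1/8 : ℝ) := ⟨1, 3, by norm_num⟩
  have dm18 : IsDyadic (-(1/8) : ℝ) := ⟨-1, 3, by norm_num⟩
  have dm1 : IsDyadic (-1 : ℝ) := ⟨-1, 0, by norm_num⟩
  cases l <;> simp only [letterFun] <;> split_ifs
  · exact Iff.rfl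
  · exact dyi_two x
  · exact dyi_add _ d14 x
  · rw [show (x+1)/2 = x/2 + 1/2 by ring, dyi_add _ d12, dyi_half]
  · exact Iff.rfl
  · exact Iff.rfl
  · rw [show 2*x - 1/2 = 2*x + -(1/2) by ring, dyi_add _ dm12, dyi_two]
  · exact dyi_add _ d18 x
  · rw [show (x+1)/2 = x/2 + 1/2 by ring, dyi_add _ d12, dyi_half]
  · exact Iff.rfl
  · exact Iff.rfl
  · exact dyi_half x
  · rw [show x - 1/4 = x + -(1/4) by ring, dyi_add _ dm14]
  · rw [show 2*x - 1 = 2*x + -1 by ring, dyi_add _ dm1, dyi_two]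
  · exact Iff.rfl
  · exact Iff.rfl
  · rw [show x/2 + 1/4 = x/2 + 1/4 from rfl, dyi_add _ d14, dyi_half]
  · rw [show x - 1/8 = x + -(1/8) by ring, dyi_add _ dm18]
  · rw [show 2*x - 1 = 2*x + -1 by ring, dyi_add _ dm1, dyi_two]
  · exact Iff.rfl

lemma wordEval_dyadic_iff (w : Word) (x : ℝ) :
    IsDyadic (wordEval w x) ↔ IsDyadic x := by
  induction w generalizing x with
  | nil => exact Iff.rfl
  | cons l w ih => rw [wordEval_cons, ih]; exact letter_dyadic_iff l x

/-! ### Derivatives -/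

lemma affine_deriv {s : Set ℝ} (hs : IsOpen s) {y : ℝ} (hy : y ∈ s) {f : ℝ → ℝ} (c d : ℝ)
    (h : ∀ z ∈ s, f z = c*z + d) : HasDerivAt f c y := by
  have h1 : HasDerivAt (fun z : ℝ => c*z + d) c y := by
    simpa using ((hasDerivAt_id y).const_mul c).add_const d
  exact h1.congr_of_eventuallyEq (Filter.eventually_of_mem (hs.mem_nhds hy) h)

noncomputable def Dl : Finset ℝ := {0, 1/4, 1/2, 5/8, 3/4, 7/8, 1}

lemma Dl_dyadic : ∀ x ∈ Dl, IsDyadic x := by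
  intro x hx
  simp only [Dl, Finset.mem_insert, Finset.mem_singleton] at hx
  rcases hx with rfl | rfl | rfl | rfl | rfl | rfl | rfl
  · exact ⟨0, 0, by norm_num⟩
  · exact ⟨1, 2, by norm_num⟩
  · exact ⟨1, 1, by norm_num⟩
  · exact ⟨5, 3, by norm_num⟩
  · exact ⟨3, 2, by norm_num⟩
  · exact ⟨7, 3, by norm_num⟩
  · exact ⟨1, 0, by norm_num⟩

lemma zpow0 : ((2:ℝ)^(0:ℤ)) = 1 := by norm_num
lemma zpow1 : ((2:ℝ)^(1:ℤ)) = 2 := by norm_num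
lemma zpowm1 : ((2:ℝ)^(-1:ℤ)) = 1/2 := by norm_num

set_option maxHeartbeats 2000000 in
lemma letter_deriv (l : Letter) {y : ℝ} (hy : y ∉ Dl) :
    ∃ m : ℤ, HasDerivAt (letterFun l) ((2:ℝ)^m) y := by
  simp only [Dl, Finset.mem_insert, Finset.mem_singleton, not_or] at hy
  obtain ⟨e0, e14, e12, e58, e34, e78, e1⟩ := hy
  cases l
  · -- x0
    rcases lt_trichotomy y (0) with h | h | h
    · refine ⟨0, ?_⟩
      rw [zpow0]
      refine affine_deriv isOpen_Iio h 1 0 ?_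
      intro z hz
      first
        | (simp only [Set.mem_Iio] at hz; simp only [letterFun]; split_ifs <;> linarith)
        | (simp only [Set.mem_Ioi] at hz; simp only [letterFun]; split_ifs <;> linarith)
        | (obtain ⟨ha, hb⟩ := hz; simp only [letterFun]; split_ifs <;> linarith)
    · exact absurd h e0
    rcases lt_trichotomy y (1/4) with h2 | h2 | h2
    · refine ⟨1, ?_⟩
      rw [zpow1]
      refine affine_deriv isOpen_Ioo (Set.mem_Ioo.2 ⟨h, h2⟩) 2 0 ?_
      intro z hz
      first
        | (simp only [Set.mem_Iio] at hz; simp only [letterFun]; split_ifs <;> linarith)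
        | (simp only [Set.mem_Ioi] at hz; simp only [letterFun]; split_ifs <;> linarith)
        | (obtain ⟨ha, hb⟩ := hz; simp only [letterFun]; split_ifs <;> linarith)
    · exact absurd h2 e14
    rcases lt_trichotomy y (1/2) with h3 | h3 | h3
    · refine ⟨0, ?_⟩
      rw [zpow0]
      refine affine_deriv isOpen_Ioo (Set.mem_Ioo.2 ⟨h2, h3⟩) 1 (1/4) ?_
      intro z hz
      first
        | (simp only [Set.mem_Iio] at hz; simp only [letterFun]; split_ifs <;> linarith)
        | (simp only [Set.mem_Ioi] at hz; simp only [letterFun]; split_ifs <;> linarith)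
        | (obtain ⟨ha, hb⟩ := hz; simp only [letterFun]; split_ifs <;> linarith)
    · exact absurd h3 e12
    rcases lt_trichotomy y (1) with h4 | h4 | h4
    · refine ⟨-1, ?_⟩
      rw [zpowm1]
      refine affine_deriv isOpen_Ioo (Set.mem_Ioo.2 ⟨h3, h4⟩) (1/2) (1/2) ?_
      intro z hz
      first
        | (simp only [Set.mem_Iio] at hz; simp only [letterFun]; split_ifs <;> linarith)
        | (simp only [Set.mem_Ioi] at hz; simp only [letterFun]; split_ifs <;> linarith)
        | (obtain ⟨ha, hb⟩ := hz; simp only [letterFun]; split_ifs <;> linarith)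
    · exact absurd h4 e1
    · refine ⟨0, ?_⟩
      rw [zpow0]
      refine affine_deriv isOpen_Ioi h4 1 0 ?_
      intro z hz
      first
        | (simp only [Set.mem_Iio] at hz; simp only [letterFun]; split_ifs <;> linarith)
        | (simp only [Set.mem_Ioi] at hz; simp only [letterFun]; split_ifs <;> linarith)
        | (obtain ⟨ha, hb⟩ := hz; simp only [letterFun]; split_ifs <;> linarith)
  · -- x1
    rcases lt_trichotomy y (1/2) with h | h | h
    · refine ⟨0, ?_⟩
      rw [zpow0]
      refine affine_deriv isOpen_Iio h 1 0 ?_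
      intro z hz
      first
        | (simp only [Set.mem_Iio] at hz; simp only [letterFun]; split_ifs <;> linarith)
        | (simp only [Set.mem_Ioi] at hz; simp only [letterFun]; split_ifs <;> linarith)
        | (obtain ⟨ha, hb⟩ := hz; simp only [letterFun]; split_ifs <;> linarith)
    · exact absurd h e12
    rcases lt_trichotomy y (5/8) with h2 | h2 | h2
    · refine ⟨1, ?_⟩
      rw [zpow1]
      refine affine_deriv isOpen_Ioo (Set.mem_Ioo.2 ⟨h, h2⟩) 2 (-(1/2)) ?_
      intro z hz
      first
        | (simp only [Set.mem_Iio] at hz; simp only [letterFun]; split_ifs <;> linarith)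
        | (simp only [Set.mem_Ioi] at hz; simp only [letterFun]; split_ifs <;> linarith)
        | (obtain ⟨ha, hb⟩ := hz; simp only [letterFun]; split_ifs <;> linarith)
    · exact absurd h2 e58
    rcases lt_trichotomy y (3/4) with h3 | h3 | h3
    · refine ⟨0, ?_⟩
      rw [zpow0]
      refine affine_deriv isOpen_Ioo (Set.mem_Ioo.2 ⟨h2, h3⟩) 1 (1/8) ?_
      intro z hz
      first
        | (simp only [Set.mem_Iio] at hz; simp only [letterFun]; split_ifs <;> linarith)
        | (simp only [Set.mem_Ioi] at hz; simp only [letterFun]; split_ifs <;> linarith)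
        | (obtain ⟨ha, hb⟩ := hz; simp only [letterFun]; split_ifs <;> linarith)
    · exact absurd h3 e34
    rcases lt_trichotomy y (1) with h4 | h4 | h4
    · refine ⟨-1, ?_⟩
      rw [zpowm1]
      refine affine_deriv isOpen_Ioo (Set.mem_Ioo.2 ⟨h3, h4⟩) (1/2) (1/2) ?_
      intro z hz
      first
        | (simp only [Set.mem_Iio] at hz; simp only [letterFun]; split_ifs <;> linarith)
        | (simp only [Set.mem_Ioi] at hz; simp only [letterFun]; split_ifs <;> linarith)
        | (obtain ⟨ha, hb⟩ := hz; simp only [letterFun]; split_ifs <;> linarith)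
    · exact absurd h4 e1
    · refine ⟨0, ?_⟩
      rw [zpow0]
      refine affine_deriv isOpen_Ioi h4 1 0 ?_
      intro z hz
      first
        | (simp only [Set.mem_Iio] at hz; simp only [letterFun]; split_ifs <;> linarith)
        | (simp only [Set.mem_Ioi] at hz; simp only [letterFun]; split_ifs <;> linarith)
        | (obtain ⟨ha, hb⟩ := hz; simp only [letterFun]; split_ifs <;> linarith)
  · -- x0inv
    rcases lt_trichotomy y (0) with h | h | h
    · refine ⟨0, ?_⟩
      rw [zpow0]
      refine affine_deriv isOpen_Iio h 1 0 ?_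
      intro z hz
      first
        | (simp only [Set.mem_Iio] at hz; simp only [letterFun]; split_ifs <;> linarith)
        | (simp only [Set.mem_Ioi] at hz; simp only [letterFun]; split_ifs <;> linarith)
        | (obtain ⟨ha, hb⟩ := hz; simp only [letterFun]; split_ifs <;> linarith)
    · exact absurd h e0
    rcases lt_trichotomy y (1/2) with h2 | h2 | h2
    · refine ⟨-1, ?_⟩
      rw [zpowm1]
      refine affine_deriv isOpen_Ioo (Set.mem_Ioo.2 ⟨h, h2⟩) (1/2) 0 ?_
      intro z hz
      first
        | (simp only [Set.mem_Iio] at hz; simp only [letterFun]; split_ifs <;> linarith)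
        | (simp only [Set.mem_Ioi] at hz; simp only [letterFun]; split_ifs <;> linarith)
        | (obtain ⟨ha, hb⟩ := hz; simp only [letterFun]; split_ifs <;> linarith)
    · exact absurd h2 e12
    rcases lt_trichotomy y (3/4) with h3 | h3 | h3
    · refine ⟨0, ?_⟩
      rw [zpow0]
      refine affine_deriv isOpen_Ioo (Set.mem_Ioo.2 ⟨h2, h3⟩) 1 (-(1/4)) ?_
      intro z hz
      first
        | (simp only [Set.mem_Iio] at hz; simp only [letterFun]; split_ifs <;> linarith)
        | (simp only [Set.mem_Ioi] at hz; simp only [letterFun]; split_ifs <;> linarith)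
        | (obtain ⟨ha, hb⟩ := hz; simp only [letterFun]; split_ifs <;> linarith)
    · exact absurd h3 e34
    rcases lt_trichotomy y (1) with h4 | h4 | h4
    · refine ⟨1, ?_⟩
      rw [zpow1]
      refine affine_deriv isOpen_Ioo (Set.mem_Ioo.2 ⟨h3, h4⟩) 2 (-1) ?_
      intro z hz
      first
        | (simp only [Set.mem_Iio] at hz; simp only [letterFun]; split_ifs <;> linarith)
        | (simp only [Set.mem_Ioi] at hz; simp only [letterFun]; split_ifs <;> linarith)
        | (obtain ⟨ha, hb⟩ := hz; simp only [letterFun]; split_ifs <;> linarith)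
    · exact absurd h4 e1
    · refine ⟨0, ?_⟩
      rw [zpow0]
      refine affine_deriv isOpen_Ioi h4 1 0 ?_
      intro z hz
      first
        | (simp only [Set.mem_Iio] at hz; simp only [letterFun]; split_ifs <;> linarith)
        | (simp only [Set.mem_Ioi] at hz; simp only [letterFun]; split_ifs <;> linarith)
        | (obtain ⟨ha, hb⟩ := hz; simp only [letterFun]; split_ifs <;> linarith)
  · -- x1inv
    rcases lt_trichotomy y (1/2) with h | h | h
    · refine ⟨0, ?_⟩
      rw [zpow0]
      refine affine_deriv isOpen_Iio h 1 0 ?_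
      intro z hz
      first
        | (simp only [Set.mem_Iio] at hz; simp only [letterFun]; split_ifs <;> linarith)
        | (simp only [Set.mem_Ioi] at hz; simp only [letterFun]; split_ifs <;> linarith)
        | (obtain ⟨ha, hb⟩ := hz; simp only [letterFun]; split_ifs <;> linarith)
    · exact absurd h e12
    rcases lt_trichotomy y (3/4) with h2 | h2 | h2
    · refine ⟨-1, ?_⟩
      rw [zpowm1]
      refine affine_deriv isOpen_Ioo (Set.mem_Ioo.2 ⟨h, h2⟩) (1/2) (1/4) ?_
      intro z hz
      first
        | (simp only [Set.mem_Iio] at hz; simp only [letterFun]; split_ifs <;> linarith)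
        | (simp only [Set.mem_Ioi] at hz; simp only [letterFun]; split_ifs <;> linarith)
        | (obtain ⟨ha, hb⟩ := hz; simp only [letterFun]; split_ifs <;> linarith)
    · exact absurd h2 e34
    rcases lt_trichotomy y (7/8) with h3 | h3 | h3
    · refine ⟨0, ?_⟩
      rw [zpow0]
      refine affine_deriv isOpen_Ioo (Set.mem_Ioo.2 ⟨h2, h3⟩) 1 (-(1/8)) ?_
      intro z hz
      first
        | (simp only [Set.mem_Iio] at hz; simp only [letterFun]; split_ifs <;> linarith)
        | (simp only [Set.mem_Ioi] at hz; simp only [letterFun]; split_ifs <;> linarith)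
        | (obtain ⟨ha, hb⟩ := hz; simp only [letterFun]; split_ifs <;> linarith)
    · exact absurd h3 e78
    rcases lt_trichotomy y (1) with h4 | h4 | h4
    · refine ⟨1, ?_⟩
      rw [zpow1]
      refine affine_deriv isOpen_Ioo (Set.mem_Ioo.2 ⟨h3, h4⟩) 2 (-1) ?_
      intro z hz
      first
        | (simp only [Set.mem_Iio] at hz; simp only [letterFun]; split_ifs <;> linarith)
        | (simp only [Set.mem_Ioi] at hz; simp only [letterFun]; split_ifs <;> linarith)
        | (obtain ⟨ha, hb⟩ := hz; simp only [letterFun]; split_ifs <;> linarith)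
    · exact absurd h4 e1
    · refine ⟨0, ?_⟩
      rw [zpow0]
      refine affine_deriv isOpen_Ioi h4 1 0 ?_
      intro z hz
      first
        | (simp only [Set.mem_Iio] at hz; simp only [letterFun]; split_ifs <;> linarith)
        | (simp only [Set.mem_Ioi] at hz; simp only [letterFun]; split_ifs <;> linarith)
        | (obtain ⟨ha, hb⟩ := hz; simp only [letterFun]; split_ifs <;> linarith)

lemma inF_wordEval (w : Word) : InF (wordEval w) := by
  induction w using List.reverseRecOn with
  | nil =>
    refine ⟨strictMono_id, Function.bijective_id, fun x _ => rfl, fun x _ => rfl,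
      ∅, by simp, fun x _ => ⟨0, ?_⟩⟩
    rw [zpow0]; exact hasDerivAt_id x
  | append_singleton w l ih =>
    obtain ⟨hsm, hbij, hb0, hb1, D, hDdy, hDer⟩ := ih
    have hfun : wordEval (w ++ [l]) = fun x => letterFun l (wordEval w x) := by
      funext x; rw [wordEval_append, wordEval_singleton]
    rw [hfun]
    have hpre : ((wordEval w) ⁻¹' (Dl : Set ℝ)).Finite :=
      Set.Finite.preimage (fun a _ b _ h => hbij.1 h) (Dl.finite_toSet)
    refine ⟨fun a b h => letter_strictMono l (hsm h),
      (letter_bijective l).comp hbij,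
      fun x hx => by show letterFun l (wordEval w x) = x; rw [hb0 x hx]; exact letter_nonpos l hx,
      fun x hx => by show letterFun l (wordEval w x) = x; rw [hb1 x hx]; exact letter_ge_one l hx,
      D ∪ hpre.toFinset, ?_, ?_⟩
    · intro x hx
      rcases Finset.mem_union.1 hx with h | h
      · exact hDdy x h
      · have : wordEval w x ∈ (Dl : Set ℝ) := by
          simpa using (Set.Finite.mem_toFinset hpre).1 h
        exact (wordEval_dyadic_iff w x).1 (Dl_dyadic _ this)
    · intro x hx
      rw [Finset.mem_union, not_or] at hx
      obtain ⟨hx1, hx2⟩ := hx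
      obtain ⟨m, hm⟩ := hDer x hx1
      have hnin : wordEval w x ∉ Dl := by
        intro hc
        exact hx2 ((Set.Finite.mem_toFinset hpre).2 (by simpa using hc))
      obtain ⟨j, hj⟩ := letter_deriv l hnin
      refine ⟨j + m, ?_⟩
      rw [zpow_add₀ (by norm_num : (2:ℝ) ≠ 0)]
      exact hj.comp x hm

/-! ### step machinery -/

lemma take_eval_succ (w : Word) (t : ℕ) (h : t < w.length) (x : ℝ) :
    wordEval (w.take (t+1)) x
      = letterFun (w.getD t Letter.x0) (wordEval (w.take t) x) := by
  have h1 : w.take (t+1) = w.take t ++ [w.getD t Letter.x0] := by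
    rw [List.take_succ]
    congr 1
    rw [List.getElem?_eq_getElem h]
    simp [List.getD_eq_getElem?_getD, List.getElem?_eq_getElem h]
  rw [h1, wordEval_append, wordEval_singleton]

lemma take_eval_stop (w : Word) (t : ℕ) (h : w.length ≤ t) (x : ℝ) :
    wordEval (w.take t) x = wordEval w x := by
  rw [List.take_of_length_le h]

lemma tele (f : ℕ → ℤ) {a b : ℕ} (h : a ≤ b) :
    ∑ s ∈ Finset.Ico a b, (f (s+1) - f s) = f b - f a := by
  induction b, h using Nat.le_induction with
  | base => simp
  | succ b hb ih => rw [Finset.sum_Ico_succ_top hb, ih]; ring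

lemma lam_three (m : ℕ) : lam ((3:ℝ)/2^m) = (m:ℤ) - 2 := by
  have hp : (0:ℝ) < 2^m := by positivity
  have e1 : (2:ℝ)^((1:ℤ) - m) = 2/2^m := by
    rw [zpow_sub₀ (by norm_num : (2:ℝ) ≠ 0), zpow_one, zpow_natCast]
  have e2 : (2:ℝ)^((1:ℤ) - m + 1) = 4/2^m := by
    rw [show (1:ℤ) - m + 1 = 2 - m by ring, zpow_sub₀ (by norm_num : (2:ℝ) ≠ 0),
      zpow_natCast]
    norm_num
  have hlog : Int.log 2 ((3:ℝ)/2^m) = 1 - m := by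
    apply logEq
    · rw [e1]; exact (div_le_div_iff_of_pos_right hp).2 (by norm_num)
    · rw [e2]; exact (div_lt_div_iff_of_pos_right hp).2 (by norm_num)
  simp only [lam, hlog]; ring

/-- All the per–step ledger facts, for one letter applied to a pair `a < b`. -/
lemma step_facts (l : Letter) {a b : ℝ} (ha0 : 0 < a) (hab : a < b) (hb1 : b < 1) :
    ((lam (1 - letterFun l b) - lam (letterFun l b)) - (lam (1-b) - lam b)
        ≤ 1 + (if (lam (1 - letterFun l b) - lam (letterFun l b)) - (lam (1-b) - lam b) = 2
                then (1:ℤ) else 0)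
          - 2*(if l = Letter.x0inv then (1:ℤ) else 0))
    ∧ ((if (lam (1 - letterFun l b) - lam (letterFun l b)) - (lam (1-b) - lam b) = 2
          then (1:ℤ) else 0) + (lam (letterFun l a) - lam a)
        ≤ (if l = Letter.x0inv then (1:ℤ) else 0))
    ∧ ((if (lam (1 - letterFun l b) - lam (letterFun l b)) - (lam (1-b) - lam b) = 2
          then (1:ℤ) else 0) + (lam (letterFun l b) - lam b)
        ≤ (if l = Letter.x0inv then (1:ℤ) else 0)) := by
  have hb0 : 0 < b := ha0.trans hab
  have ha1 : a < 1 := hab.trans hb1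
  have hbpos := letter_pos l hb0 hb1
  have hapos := letter_pos l ha0 ha1
  have heb0 : (0:ℝ) < 1 - b := by linarith
  have heb0' : (0:ℝ) < 1 - letterFun l b := by linarith [hbpos.2]
  -- generic bounds
  have hdbl : lam b - 1 ≤ lam (letterFun l b) := (lam_step l hb0 hb1).1
  have hdbu : lam (letterFun l b) ≤ lam b + 1 := (lam_step l hb0 hb1).2
  have hdal : lam a - 1 ≤ lam (letterFun l a) := (lam_step l ha0 ha1).1
  have hdau : lam (letterFun l a) ≤ lam a + 1 := (lam_step l ha0 ha1).2
  have hebu : lam (1 - letterFun l b) ≤ lam (1-b) + 1 := by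
    have h3 := letter_lb3 l hb0 hb1
    have := lam_anti (x := (1-b)/2) (by linarith) h3
    rw [lam_half heb0] at this; omega
  have hebl : lam (1-b) - 1 ≤ lam (1 - letterFun l b) := by
    have h4 := letter_lb4 l hb0 hb1
    have := lam_anti (x := 1 - letterFun l b) heb0' h4
    rw [lam_double heb0] at this; omega
  cases l
  · -- x0
    simp only [reduceCtorEq, if_false]
    have hge_b : b ≤ letterFun Letter.x0 b := x0_ge hb0.le hb1.le
    have hge_a : a ≤ letterFun Letter.x0 a := x0_ge ha0.le ha1.le
    have hdbu0 : lam (letterFun Letter.x0 b) ≤ lam b := lam_anti hb0 hge_b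
    have hdau0 : lam (letterFun Letter.x0 a) ≤ lam a := lam_anti ha0 hge_a
    have hebl0 : lam (1-b) ≤ lam (1 - letterFun Letter.x0 b) :=
      lam_anti heb0' (by linarith)
    have hdich : lam (1 - letterFun Letter.x0 b) = lam (1-b) + 1
        ∨ lam (letterFun Letter.x0 b) = lam b - 1 := by
      rcases le_or_gt (1/2) b with h | h
      · exact Or.inl (x0_ell_hi h hb1)
      · exact Or.inr (x0_lam_lo hb0 h)
    have hkey : (lam (1 - letterFun Letter.x0 b) - lam (letterFun Letter.x0 b))
        - (lam (1-b) - lam b) = 2 →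
        lam (letterFun Letter.x0 a) = lam a - 1 := by
      intro h2
      have hdb : lam (letterFun Letter.x0 b) = lam b - 1 := by omega
      have hblt : b < 1/2 := by
        by_contra hcon
        push_neg at hcon
        have := x0_lam_eq_hi hcon hb1
        omega
      exact x0_lam_lo ha0 (by linarith)
    refine ⟨?_, ?_, ?_⟩ <;> split_ifs with h2 <;>
      first
        | (have := hkey h2; omega)
        | omega
  · -- x1
    simp only [reduceCtorEq, if_false]
    have hdb : lam (letterFun Letter.x1 b) = lam b := x1_lam_eq hb0 hb1
    have hda : lam (letterFun Letter.x1 a) = lam a := x1_lam_eq ha0 ha1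
    have hebl0 : lam (1-b) ≤ lam (1 - letterFun Letter.x1 b) :=
      lam_anti heb0' (by linarith [x1_ge hb0.le hb1.le])
    refine ⟨?_, ?_, ?_⟩ <;> split_ifs with h2 <;> omega
  · -- x0inv
    simp only [if_true]
    have hle_b : letterFun Letter.x0inv b ≤ b := x0inv_le hb0.le hb1.le
    have hle_a : letterFun Letter.x0inv a ≤ a := x0inv_le ha0.le ha1.le
    have hdb0 : lam b ≤ lam (letterFun Letter.x0inv b) := lam_anti hbpos.1 hle_b
    have hda0 : lam a ≤ lam (letterFun Letter.x0inv a) := lam_anti hapos.1 hle_a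
    have hebu0 : lam (1 - letterFun Letter.x0inv b) ≤ lam (1-b) :=
      lam_anti heb0 (by linarith)
    have hdich : lam (1 - letterFun Letter.x0inv b) = lam (1-b) - 1
        ∨ lam (letterFun Letter.x0inv b) = lam b + 1 := by
      rcases le_or_gt (3/4) b with h | h
      · exact Or.inl (x0inv_ell_hi h hb1)
      · exact Or.inr (x0inv_lam_lo hb0 h)
    refine ⟨?_, ?_, ?_⟩ <;> split_ifs with h2 <;> omega
  · -- x1inv
    simp only [reduceCtorEq, if_false]
    have hdb : lam (letterFun Letter.x1inv b) = lam b := x1inv_lam_eq hb0 hb1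
    have hda : lam (letterFun Letter.x1inv a) = lam a := x1inv_lam_eq ha0 ha1
    have hebu0 : lam (1 - letterFun Letter.x1inv b) ≤ lam (1-b) :=
      lam_anti heb0 (by linarith [x1inv_le hb0.le hb1.le])
    refine ⟨?_, ?_, ?_⟩ <;> split_ifs with h2 <;> omega

lemma lower_count (w : Word) (k : ℕ) (T : ℕ) (hT1 : 1 ≤ T)
    (hT3 : wordEval (w.take (T-1)) (vbMid k) = 3/4) : k ≤ T := by
  have hva0 : (0:ℝ) < vaMid k := by unfold vaMid; positivity
  have hva1 : vaMid k < 1 := by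
    apply pow_lt_one₀ (by norm_num) (by norm_num)
    omega
  have hvb0 : (0:ℝ) < vbMid k := by unfold vbMid vaMid at *; linarith
  have hvb1 : vbMid k < 1 := by unfold vbMid vaMid at *; linarith
  have key : ∀ t : ℕ, 1 - wordEval (w.take t) (vbMid k) ≤ 2^t * (1 - vbMid k) := by
    intro t
    induction t with
    | zero => simp [wordEval]
    | succ t ih =>
      have hmono : (2:ℝ)^t * (1 - vbMid k) ≤ 2^(t+1) * (1 - vbMid k) := by
        have h1 : (2:ℝ)^t ≤ 2^(t+1) := pow_le_pow_exp (by omega)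
        nlinarith
      rcases lt_or_ge t w.length with h | h
      · rw [take_eval_succ w t h]
        have hmem := wordEval_mem (w.take t) hvb0 hvb1
        have h4 := letter_lb4 (w.getD t Letter.x0) hmem.1 hmem.2
        have : (1:ℝ) - letterFun (w.getD t Letter.x0) (wordEval (w.take t) (vbMid k))
            ≤ 2^(t+1) * (1 - vbMid k) := by
          calc (1:ℝ) - letterFun (w.getD t Letter.x0) (wordEval (w.take t) (vbMid k))
              ≤ 2*(1 - wordEval (w.take t) (vbMid k)) := h4
          _ ≤ 2*(2^t*(1 - vbMid k)) := by linarith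
          _ = 2^(t+1)*(1 - vbMid k) := by rw [pow_succ]; ring
        exact this
      · rw [take_eval_stop w (t+1) (by omega), ← take_eval_stop w t h]
        linarith
  have h2 := key (T-1)
  rw [hT3] at h2
  have hv : 1 - vbMid k = 1/2^(k+1) := by
    unfold vbMid; rw [div_pow, one_pow]; ring
  rw [hv] at h2
  have hp : (0:ℝ) < 2^(k+1) := by positivity
  rw [mul_one_div, le_div_iff₀ hp] at h2
  have h4 : (2:ℝ)^(k+1) ≤ 2^(T+1) := by
    calc (2:ℝ)^(k+1) ≤ (1 - 3/4)*2^(k+1)*4 := by linarith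
    _ ≤ 2^(T-1)*4 := by nlinarith
    _ = 2^(T-1)*2^2 := by norm_num
    _ = 2^(T-1+2) := by rw [pow_add]
    _ = 2^(T+1) := by congr 1; omega
  have h5 := (pow_le_pow_iff_right₀ (by norm_num : (1:ℝ) < 2)).1 h4
  omega

lemma main_count (w : Word) (k i : ℕ) (hk2 : 2 ≤ k) (hi0 : 1 ≤ i) (hi2 : i ≤ k)
    (hwe : wordEval w = wordEval (wword k i))
    (T ta : ℕ) (hTta : T < ta)
    (hT5 : wordEval (w.take T) (vbMid k) = 5/8)
    (hta3 : wordEval (w.take (ta - 1)) (vaMid k) = 3/4) :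
    T + (2*k + i) ≤ w.length + 1 := by
  set n := w.length with hn
  have hva0 : (0:ℝ) < vaMid k := by unfold vaMid; positivity
  have hhalf : vaMid k = 1/2^(k+1) := by unfold vaMid; rw [div_pow, one_pow]
  have h4p : (4:ℝ) ≤ 2^(k+1) := by
    calc (4:ℝ) = 2^2 := by norm_num
    _ ≤ _ := pow_le_pow_exp (by omega)
  have hva2 : vaMid k < 1/2 := by
    rw [hhalf, div_lt_div_iff₀ (by positivity) (by norm_num)]
    linarith
  have hva1 : vaMid k < 1 := by linarith
  have hvb : vbMid k = 1 - vaMid k := rfl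
  have hvb0 : (0:ℝ) < vbMid k := by rw [hvb]; linarith
  have hvb1 : vbMid k < 1 := by rw [hvb]; linarith
  have hvab : vaMid k < vbMid k := by rw [hvb]; linarith
  have hA : ∀ t, 0 < wordEval (w.take t) (vaMid k) ∧ wordEval (w.take t) (vaMid k) < 1 :=
    fun t => wordEval_mem _ hva0 hva1
  have hB : ∀ t, 0 < wordEval (w.take t) (vbMid k) ∧ wordEval (w.take t) (vbMid k) < 1 :=
    fun t => wordEval_mem _ hvb0 hvb1
  have hAB : ∀ t, wordEval (w.take t) (vaMid k) < wordEval (w.take t) (vbMid k) :=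
    fun t => wordEval_strictMono _ hvab
  have hAn : wordEval (w.take n) (vaMid k) = 3/2^(i+2) := by
    rw [List.take_length]
    rw [hwe]
    exact eval_wword_va k i hk2 hi0
  have hBn : wordEval (w.take n) (vbMid k) = 1 - 3/2^(2*k+2-i) := by
    rw [List.take_length]
    rw [hwe]
    exact eval_wword_vb k i hk2 hi2
  have hm4 : 4 ≤ 2*k+2-i := by omega
  have h16 : (16:ℝ) ≤ 2^(2*k+2-i) := by
    calc (16:ℝ) = 2^4 := by norm_num
    _ ≤ _ := pow_le_pow_exp hm4
  have hq : (3:ℝ)/2^(2*k+2-i) ≤ 3/16 := by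
    rw [div_le_div_iff₀ (by positivity) (by norm_num)]; linarith
  have hq0 : (0:ℝ) < 3/2^(2*k+2-i) := by positivity
  have hwB : wordEval w (vbMid k) = 1 - 3/2^(2*k+2-i) := by
    rw [← take_eval_stop w n le_rfl]; exact hBn
  have hwA : wordEval w (vaMid k) = 3/2^(i+2) := by
    rw [← take_eval_stop w n le_rfl]; exact hAn
  have hTn : T ≤ n := by
    by_contra hcon
    push_neg at hcon
    rw [take_eval_stop w T (by omega), hwB] at hT5
    linarith
  have h38 : (3:ℝ)/2^(i+2) ≤ 3/8 := by
    rw [div_le_div_iff₀ (by positivity) (by norm_num)]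
    have h8 : (8:ℝ) ≤ 2^(i+2) := by
      calc (8:ℝ) = 2^3 := by norm_num
      _ ≤ _ := pow_le_pow_exp (by omega)
    linarith
  have htan : ta - 1 ≤ n := by
    by_contra hcon
    push_neg at hcon
    rw [take_eval_stop w (ta-1) (by omega), hwA] at hta3
    linarith
  have hTta1 : T ≤ ta - 1 := by omega
  set LA : ℕ → ℤ := fun t => lam (wordEval (w.take t) (vaMid k)) with hLA
  set LB : ℕ → ℤ := fun t => lam (wordEval (w.take t) (vbMid k)) with hLB
  set G : ℕ → ℤ := fun t => lam (1 - wordEval (w.take t) (vbMid k))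
      - lam (wordEval (w.take t) (vbMid k)) with hG
  set x2 : ℕ → ℤ := fun s => if G (s+1) - G s = 2 then 1 else 0 with hx2
  set y0 : ℕ → ℤ := fun s => if w.getD s Letter.x0 = Letter.x0inv then 1 else 0 with hy0
  have hstep : ∀ s, s < n →
      (G (s+1) - G s ≤ 1 + x2 s - 2*y0 s)
      ∧ (x2 s + (LA (s+1) - LA s) ≤ y0 s)
      ∧ (x2 s + (LB (s+1) - LB s) ≤ y0 s) := by
    intro s hs
    have eA := take_eval_succ w s hs (vaMid k)
    have eB := take_eval_succ w s hs (vbMid k)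
    have hsf := step_facts (w.getD s Letter.x0) (hA s).1 (hAB s) (hB s).2
    simp only [hx2, hy0, hG, hLA, hLB, eA, eB]
    exact hsf
  have sum1 : G n - G T ≤ ((n:ℤ) - T) + (∑ s ∈ Finset.Ico T n, x2 s)
      - 2*(∑ s ∈ Finset.Ico T n, y0 s) := by
    have h1 : ∑ s ∈ Finset.Ico T n, (G (s+1) - G s) = G n - G T := tele G hTn
    rw [← h1]
    calc ∑ s ∈ Finset.Ico T n, (G (s+1) - G s)
        ≤ ∑ s ∈ Finset.Ico T n, (1 + x2 s - 2*y0 s) :=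
          Finset.sum_le_sum (fun s hs => (hstep s (Finset.mem_Ico.1 hs).2).1)
    _ = ∑ s ∈ Finset.Ico T n, ((1:ℤ) + x2 s) - ∑ s ∈ Finset.Ico T n, 2*y0 s := by
          rw [← Finset.sum_sub_distrib]
    _ = (∑ s ∈ Finset.Ico T n, (1:ℤ)) + (∑ s ∈ Finset.Ico T n, x2 s)
          - 2*(∑ s ∈ Finset.Ico T n, y0 s) := by
          rw [Finset.sum_add_distrib, Finset.mul_sum]
    _ = ((n:ℤ) - T) + (∑ s ∈ Finset.Ico T n, x2 s)
          - 2*(∑ s ∈ Finset.Ico T n, y0 s) := by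
          rw [Finset.sum_const, Nat.card_Ico, nsmul_eq_mul, mul_one, Nat.cast_sub hTn]
  have sum2 : (∑ s ∈ Finset.Ico (ta-1) n, x2 s) + (LA n - LA (ta-1))
      ≤ ∑ s ∈ Finset.Ico (ta-1) n, y0 s := by
    have h1 : ∑ s ∈ Finset.Ico (ta-1) n, (LA (s+1) - LA s) = LA n - LA (ta-1) :=
      tele LA htan
    rw [← h1, ← Finset.sum_add_distrib]
    exact Finset.sum_le_sum (fun s hs => (hstep s (Finset.mem_Ico.1 hs).2).2.1)
  have sum3 : (∑ s ∈ Finset.Ico T (ta-1), x2 s) + (LB (ta-1) - LB T)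
      ≤ ∑ s ∈ Finset.Ico T (ta-1), y0 s := by
    have h1 : ∑ s ∈ Finset.Ico T (ta-1), (LB (s+1) - LB s) = LB (ta-1) - LB T :=
      tele LB hTta1
    rw [← h1, ← Finset.sum_add_distrib]
    refine Finset.sum_le_sum (fun s hs => (hstep s ?_).2.2)
    have := (Finset.mem_Ico.1 hs).2
    omega
  have hGT : G T = 1 := by
    simp only [hG, hT5]
    rw [show (1:ℝ) - 5/8 = 3/8 by norm_num, lam_one (by norm_num) (by norm_num),
      lam_zero (by norm_num) (by norm_num)]
    norm_num
  have hGn : G n = 2*(k:ℤ) - i := by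
    simp only [hG, hBn]
    rw [show (1:ℝ) - (1 - 3/2^(2*k+2-i)) = 3/2^(2*k+2-i) by ring, lam_three,
      lam_zero (by linarith) (by linarith)]
    rw [Nat.cast_sub (show i ≤ 2*k+2 by omega)]
    push_cast
    ring
  have hLAta : LA (ta-1) = 0 := by
    simp only [hLA, hta3]
    exact lam_zero (by norm_num) (by norm_num)
  have hLAn : LA n = i := by
    simp only [hLA, hAn]
    rw [lam_three]
    push_cast
    ring
  have hLBT : LB T = 0 := by
    simp only [hLB, hT5]
    exact lam_zero (by norm_num) (by norm_num)
  have hLBta : 0 ≤ LB (ta-1) := lam_nonneg (hB _).1 (hB _).2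
  have hx2nn : ∀ (F : Finset ℕ), 0 ≤ ∑ s ∈ F, x2 s := by
    intro F
    apply Finset.sum_nonneg
    intro s _
    simp only [hx2]
    split_ifs <;> norm_num
  have hy0nn : ∀ (F : Finset ℕ), 0 ≤ ∑ s ∈ F, y0 s := by
    intro F
    apply Finset.sum_nonneg
    intro s _
    simp only [hy0]
    split_ifs <;> norm_num
  have hsplitx : (∑ s ∈ Finset.Ico T (ta-1), x2 s) + (∑ s ∈ Finset.Ico (ta-1) n, x2 s)
      = ∑ s ∈ Finset.Ico T n, x2 s := Finset.sum_Ico_consecutive _ hTta1 htan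
  have hsplity : (∑ s ∈ Finset.Ico T (ta-1), y0 s) + (∑ s ∈ Finset.Ico (ta-1) n, y0 s)
      = ∑ s ∈ Finset.Ico T n, y0 s := Finset.sum_Ico_consecutive _ hTta1 htan
  have final : (T:ℤ) + (2*(k:ℤ)+(i:ℤ)) ≤ (n:ℤ) + 1 := by
    rw [hGT, hGn] at sum1
    rw [hLAn, hLAta] at sum2
    rw [hLBT] at sum3
    have n1 := hx2nn (Finset.Ico T (ta-1))
    have n2 := hx2nn (Finset.Ico (ta-1) n)
    have n3 := hy0nn (Finset.Ico T (ta-1))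
    have n4 := hy0nn (Finset.Ico (ta-1) n)
    linarith
  exact_mod_cast final

theorem statement8 (L : Set Word) (c M : ℕ) (hM : 1 ≤ M)
    (hrep : ∀ f : ℝ → ℝ, InF f → ∃! w : Word, w ∈ L ∧ wordEval w = f)
    (hlen : ∀ f : ℝ → ℝ, InF f → ∀ w : Word, w ∈ L → wordEval w = f → w.length ≤ glen f + c)
    (hft : FellowTraveler L M)
    (C : ℕ) (hC : C = if Even (max c M) then max c M else max c M + 1)
    (k : ℕ) (hk : 1000 * C < k)
    (l : ℕ) (hl : l = C / 2 + 1)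
    (i : ℕ) (hi1 : k - l ≤ i) (hi2 : i ≤ k)
    (wi' : Word) (hwL : wi' ∈ L) (hwe : wordEval wi' = wordEval (wword k i))
    (h1 : CondW1 wi' k) :
    ∀ t : ℕ, madeInternalAt wi' t (vbMid k) → k ≤ t ∧ t ≤ k + C + 2 := by
  intro T hT
  have hT' := hT
  unfold madeInternalAt at hT'
  obtain ⟨hT5, hT3⟩ := hT'
  have hcmax := Nat.le_max_left c M
  have hMmax := Nat.le_max_right c M
  have hcC : c ≤ C := by rw [hC]; split_ifs <;> omega
  have hC1 : 1 ≤ C := by rw [hC]; split_ifs <;> omega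
  have hk2 : 2 ≤ k := by omega
  have hi0 : 1 ≤ i := by omega
  have hT1 : 1 ≤ T := by
    rcases Nat.eq_zero_or_pos T with rfl | h
    · exfalso
      rw [show (0:ℕ) - 1 = 0 from rfl] at hT3
      rw [hT5] at hT3
      norm_num at hT3
    · exact h
  have hkT : k ≤ T := lower_count wi' k T hT1 hT3
  unfold CondW1 at h1
  obtain ⟨hbex, ⟨ta, hta⟩, hord⟩ := h1
  have hTta : T < ta := hord T ta hT hta
  have hta' := hta
  unfold madeInternalAt at hta'
  have hmc := main_count wi' k i hk2 hi0 hi2 hwe T ta hTta hT5 hta'.2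
  have hInF : InF (wordEval wi') := inF_wordEval wi'
  have hlen1 := hlen (wordEval wi') hInF wi' hwL rfl
  have hglen : glen (wordEval wi') ≤ 3*k+1+i := by
    apply Nat.sInf_le
    refine ⟨wword k i, hwe.symm, ?_⟩
    simp only [wword, List.length_append, List.length_replicate, List.length_cons,
      List.length_nil]
    omega
  exact ⟨hkT, by omega⟩

end ThompsonAut
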